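/- Let x = (x_1,…,x_R) be a vector of distinct real numbers, c = (c_1,…,c_R) a vector of real numbers, B = B(x,c), k a positive integer and 1 ≤ n ≤ R. Denoting by B_{−n} the (R−1)×(R−1) matrix obtained from B by removing the n-th row and column, one has Σ_{l,m : l ≠ n, m ≠ n, l ≠ m} b_{n,l} · b_{m,n} · ((B_{−n})^k)_{l,m} = 0. -/

import Mathlib

/-- The generalized weighted Hilbert matrix `B(x,c)` with entries
`b_{m,n} = c_m c_n / (x_m - x_n)` for `m ≠ n` and `0` on the diagonal. -/
noncomputable def Bmat {R : ℕ} (x c : Fin R → ℝ) : Matrix (Fin R) (Fin R) ℝ :=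
  Matrix.of fun m n => if m = n then 0 else c m * c n / (x m - x n)

/-- The matrix `B` with the `n`-th row and column removed, indexed by the
remaining indices. -/
noncomputable def Bminus {R : ℕ} (x c : Fin R → ℝ) (n : Fin R) :
    Matrix {m : Fin R // m ≠ n} {m : Fin R // m ≠ n} ℝ :=
  (Bmat x c).submatrix (fun i : {m : Fin R // m ≠ n} => (i : Fin R))
    (fun i : {m : Fin R // m ≠ n} => (i : Fin R))

/-- For any positive integer `k` and any `n`,
`Σ_{l ≠ n, m ≠ n, l ≠ m} b_{n,l} b_{m,n} ((B_{-n})^k)_{l,m} = 0`. -/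
theorem sum_off_diag_powers_eq_zero {R : ℕ} (x c : Fin R → ℝ)
    (hx : Function.Injective x) (k : ℕ) (hk : 0 < k) (n : Fin R) :
    ∑ l : {m : Fin R // m ≠ n}, ∑ m : {m : Fin R // m ≠ n},
      (if (l : Fin R) ≠ (m : Fin R) then
        Bmat x c n l * Bmat x c m n * ((Bminus x c n) ^ k) l m
      else 0) = 0 := by
  classical
  set ι := {m : Fin R // m ≠ n}
  set P : Matrix ι ι ℝ := Bminus x c n with hPdef
  set D : Matrix ι ι ℝ := Matrix.diagonal fun l => 1 / (x n - x (l : Fin R)) with hDdef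
  set M : Matrix ι ι ℝ := D * P - P * D with hMdef
  have hxnl : ∀ l : ι, x n - x (l : Fin R) ≠ 0 := by
    intro l h
    exact l.2 (hx (by linarith)).symm
  -- entrywise identity
  have hentry : ∀ l m : ι,
      (if (l : Fin R) ≠ (m : Fin R) then
        Bmat x c n l * Bmat x c m n * (P ^ k) l m else 0)
        = -(c n) ^ 2 * (M l m * (P ^ k) l m) := by
    intro l m
    have hM : M l m = (1 / (x n - x (l:Fin R)) - 1 / (x n - x (m:Fin R))) * P l m := by
      simp [hMdef, Matrix.sub_apply, hDdef, Matrix.diagonal_mul, Matrix.mul_diagonal]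
      ring
    by_cases h : (l : Fin R) = (m : Fin R)
    · have hlm : l = m := Subtype.ext h
      subst hlm
      simp [hM]
    · have hxlm : x (l:Fin R) - x (m:Fin R) ≠ 0 := by
        intro e; exact h (hx (by linarith))
      have hBnl : Bmat x c n l = c n * c (l:Fin R) / (x n - x (l:Fin R)) := by
        have : n ≠ (l : Fin R) := fun e => l.2 e.symm
        simp [Bmat, this]
      have hBmn : Bmat x c (m:Fin R) n = c (m:Fin R) * c n / (x (m:Fin R) - x n) := by
        simp [Bmat, (m.2 : (m:Fin R) ≠ n)]
      have hPlm : P l m = c (l:Fin R) * c (m:Fin R) / (x (l:Fin R) - x (m:Fin R)) := by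
        simp [hPdef, Bminus, Bmat, Matrix.submatrix_apply, h]
      have h1 := hxnl l
      have h2 := hxnl m
      have hdiff : 1 / (x n - x (l:Fin R)) - 1 / (x n - x (m:Fin R))
          = (x (l:Fin R) - x (m:Fin R)) / ((x n - x (l:Fin R)) * (x n - x (m:Fin R))) := by
        field_simp
        ring
      have gen : ∀ a b e A : ℝ, a ≠ 0 → b ≠ 0 → e ≠ 0 →
          c n * c (l:Fin R) / a * (c (m:Fin R) * c n / -b) * A
            = -c n ^ 2 * (e / (a * b) * (c (l:Fin R) * c (m:Fin R) / e) * A) := by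
        intro a b e A ha hb he
        field_simp
      rw [if_pos h, hBnl, hBmn, hM, hPlm, hdiff,
        show x (m:Fin R) - x n = -(x n - x (m:Fin R)) from by ring]
      exact gen _ _ _ _ h1 h2 hxlm
  rw [Finset.sum_congr rfl fun l _ => Finset.sum_congr rfl fun m _ => hentry l m]
  have hfac : ∑ l : ι, ∑ m : ι, -(c n) ^ 2 * (M l m * (P ^ k) l m)
      = -(c n) ^ 2 * ∑ l : ι, ∑ m : ι, M l m * (P ^ k) l m := by
    simp [Finset.mul_sum]
  rw [hfac]
  have htr : ∑ l : ι, ∑ m : ι, M l m * (P ^ k) l m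
      = Matrix.trace (M * (P ^ k).transpose) := by
    rw [Matrix.trace]
    simp only [Matrix.diag_apply, Matrix.mul_apply, Matrix.transpose_apply]
  rw [htr]
  -- antisymmetry of P
  have hPt : P.transpose = -P := by
    ext l m
    by_cases h : (l : Fin R) = (m : Fin R)
    · have : l = m := Subtype.ext h
      subst this
      simp [hPdef, Bminus, Bmat]
    · have h' : (m : Fin R) ≠ (l : Fin R) := fun e => h e.symm
      have hxlm : x (l:Fin R) - x (m:Fin R) ≠ 0 := fun e => h (hx (by linarith))
      simp only [Matrix.transpose_apply, Matrix.neg_apply, hPdef, Bminus, Bmat,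
        Matrix.submatrix_apply, Matrix.of_apply, if_neg h', if_neg h]
      rw [show x (m:Fin R) - x (l:Fin R) = -(x (l:Fin R) - x (m:Fin R)) from by ring, div_neg]
      ring
  have hkey : Matrix.trace (M * P ^ k) = 0 := by
    have hsplit : M * P ^ k = D * P ^ (k + 1) - P * (D * P ^ k) := by
      rw [hMdef, sub_mul, mul_assoc, mul_assoc, ← pow_succ']
    rw [hsplit, Matrix.trace_sub, Matrix.trace_mul_comm P (D * P ^ k), mul_assoc,
      ← pow_succ, sub_self]
  have hPkt : (P ^ k).transpose = (-P) ^ k := by rw [Matrix.transpose_pow, hPt]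
  rcases Nat.even_or_odd k with he | ho
  · rw [hPkt, he.neg_pow, hkey, mul_zero]
  · rw [hPkt, ho.neg_pow, Matrix.mul_neg, Matrix.trace_neg, hkey, neg_zero, mul_zero]
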